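/- Let E be a directed graph, x ∈ ∂E a boundary path, and F ⊆ E* a finite set of paths. Let n = max{p : x(0,p) ∈ F} (assuming some initial segment of x lies in F) and F_x := {μ′ ∈ x(n)E* ∖ {x(n)} : x(0,n)μ′ ∈ F}, where x(n) = s(x_n). Then there exists ν ∈ s(x_n)E* such that ν has no common extension with any path in F_x, provided s(x_n)E* ≠ ∅. -/

import Mathlib

structure DirectedGraph where
  V : Type
  E : Type
  r : E → V
  s : E → V

namespace DirectedGraph

variable {G : DirectedGraph}

/-- A finite path: a list of edges `μ₁ … μₙ` with `s μᵢ = r μᵢ₊₁`, together with its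
range vertex (which is the range of the first edge when the path is nonempty, and is
the defining datum of the path when the path has length zero, i.e. is a vertex). -/
structure FinPath (G : DirectedGraph) where
  vtx : G.V
  edges : List G.E
  chain : edges.Chain' fun e f => G.s e = G.r f
  hv : ∀ e ∈ edges.head?, G.r e = vtx

/-- An infinite path `μ₁μ₂…` with `s μᵢ = r μᵢ₊₁`. -/
structure InfPath (G : DirectedGraph) where
  edge : ℕ → G.E
  chain : ∀ n, G.s (edge n) = G.r (edge (n + 1))

/-- The path space `E* ∪ E^∞`. -/
abbrev PathSpace (G : DirectedGraph) := FinPath G ⊕ InfPath G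

namespace FinPath

def length (μ : FinPath G) : ℕ := μ.edges.length

def range (μ : FinPath G) : G.V := μ.vtx

def source (μ : FinPath G) : G.V := (μ.edges.getLast?).elim μ.vtx G.s

/-- A vertex, regarded as a path of length zero. -/
def ofVertex (G : DirectedGraph) (v : G.V) : FinPath G :=
  ⟨v, [], List.isChain_nil, by simp⟩

/-- `μ.Extends ν` means `μ = νν′` for some path `ν′`. -/
def Extends (μ ν : FinPath G) : Prop := μ.vtx = ν.vtx ∧ ν.edges <+: μ.edges

end FinPath

def InfPath.range (x : InfPath G) : G.V := G.r (x.edge 0)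

/-- `x.Extends ν` means the infinite path `x` is of the form `νx′`. -/
def InfPath.Extends (x : InfPath G) (ν : FinPath G) : Prop :=
  (ν.edges = [] → x.range = ν.vtx) ∧
  ∀ i, (h : i < ν.edges.length) → x.edge i = ν.edges.get ⟨i, h⟩

/-- The cylinder set `Z(μ) = {w ∈ E* ∪ E^∞ : w = μw′}`. -/
def Cyl (μ : FinPath G) : Set (PathSpace G) :=
  {w | match w with
       | Sum.inl lam => lam.Extends μ
       | Sum.inr x => x.Extends μ}

/-- The cylinder set `Z(μe)` of the path `μ` followed by the edge `e`. -/
def CylSnoc (μ : FinPath G) (e : G.E) : Set (PathSpace G) :=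
  {w | match w with
       | Sum.inl lam => (μ.edges ++ [e]) <+: lam.edges
       | Sum.inr x => ∀ i, (h : i < (μ.edges ++ [e]).length) →
           x.edge i = (μ.edges ++ [e]).get ⟨i, h⟩}

/-- `Z(μ∖G) := Z(μ) ∖ ⋃_{e ∈ G} Z(μe)`. -/
def CylMinus (μ : FinPath G) (GS : Finset G.E) : Set (PathSpace G) :=
  Cyl μ \ ⋃ e ∈ GS, CylSnoc μ e

/-- The basic sets `Z(μ∖G)` for `μ ∈ E*` and `G ⊆ s(μ)E¹` finite. -/
def basicSets (G : DirectedGraph) : Set (Set (PathSpace G)) :=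
  {S | ∃ (μ : FinPath G) (GS : Finset G.E),
        (∀ e ∈ GS, G.r e = μ.source) ∧ S = CylMinus μ GS}

end DirectedGraph
namespace DirectedGraph

variable {G : DirectedGraph}

/-- E^{≤ n}: paths of length n, together with shorter paths whose source receives no
edges. -/
def ESle (G : DirectedGraph) (n : ℕ) : Set (FinPath G) :=
  {mu | mu.length = n ∨ (mu.length < n ∧ ∀ e : G.E, G.r e ≠ mu.source)}

variable {A : Type*} [NonUnitalCStarAlgebra A]

/-- A Cuntz-Krieger E-family: mutually orthogonal vertex projections and partial
isometries indexed by finite paths, such that paths in E^{≤n} have mutually orthogonal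
range projections, and (CK1)-(CK3) hold. -/
structure IsCKFamily (G : DirectedGraph) (t : FinPath G → A) : Prop where
  vertex_star : ∀ v, star (t (FinPath.ofVertex G v)) = t (FinPath.ofVertex G v)
  vertex_idem : ∀ v,
    t (FinPath.ofVertex G v) * t (FinPath.ofVertex G v) = t (FinPath.ofVertex G v)
  vertex_orth : ∀ v w, v ≠ w → t (FinPath.ofVertex G v) * t (FinPath.ofVertex G w) = 0
  range_orth : ∀ n : ℕ, ∀ mu ∈ ESle G n, ∀ nu ∈ ESle G n, mu ≠ nu →
    (t mu * star (t mu)) * (t nu * star (t nu)) = 0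
  ck1 : ∀ mu, star (t mu) * t mu = t (FinPath.ofVertex G mu.source)
  ck2 : ∀ mu, t (FinPath.ofVertex G mu.range) * (t mu * star (t mu)) = t mu * star (t mu)
  ck3 : ∀ (v : G.V) (n : ℕ) (h : {mu | mu ∈ ESle G n ∧ mu.range = v}.Finite),
    t (FinPath.ofVertex G v) = ∑ mu ∈ h.toFinset, t mu * star (t mu)

open Classical in
/-- The projection q_mu^F = s_mu s_mu^* ∏_{mu mu' ∈ F ∖ {mu}} (s_mu s_mu^* -
s_{mu mu'} s_{mu mu'}^*), the product being taken over the proper extensions of mu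
lying in F. -/
noncomputable def qProj (t : FinPath G → A) (F : Finset (FinPath G))
    (mu : FinPath G) : A :=
  (((F.filter fun lam => lam ≠ mu ∧ lam.Extends mu).toList).map
      fun lam => t mu * star (t mu) - t lam * star (t lam)).foldl
    (fun a b => a * b) (t mu * star (t mu))

/-- The path obtained by deleting the first n edges of lam; the vertex v is used as the
range in the degenerate case where nothing remains. -/
def FinPath.tailAfter (lam : FinPath G) (n : ℕ) (v : G.V) : FinPath G where
  vtx := ((lam.edges.drop n).head?).elim v G.r
  edges := lam.edges.drop n
  chain := lam.chain.suffix (List.drop_suffix n lam.edges)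
  hv := by
    intro e he
    cases h : (lam.edges.drop n).head? with
    | none => rw [h] at he; exact absurd he (by simp)
    | some f =>
        rw [h] at he
        simp only [Option.mem_some_iff] at he
        subst he
        rfl

end DirectedGraph

namespace DirectedGraph

/-- A vertex is singular if it receives no edges or infinitely many edges. -/
def Singular (G : DirectedGraph) (v : G.V) : Prop :=
  G.r ⁻¹' {v} = ∅ ∨ (G.r ⁻¹' {v}).Infinite

/-- The boundary path space: all infinite paths, together with the finite paths whose
source is a singular vertex. -/
def BoundaryPaths (G : DirectedGraph) : Set (PathSpace G) :=
  {w | match w with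
       | Sum.inl mu => Singular G mu.source
       | Sum.inr _ => True}

end DirectedGraph



namespace DirectedGraph

variable {G : DirectedGraph}

theorem FinPath.ext' {μ ν : FinPath G} (h1 : μ.vtx = ν.vtx) (h2 : μ.edges = ν.edges) :
    μ = ν := by
  cases μ; cases ν; dsimp at h1 h2; subst h1; subst h2; rfl

theorem aux_prefix_append_drop {α : Type*} {l₁ l₂ : List α} (h : l₁ <+: l₂) :
    l₁ ++ l₂.drop l₁.length = l₂ := by
  obtain ⟨u, rfl⟩ := h; rw [List.drop_left]

theorem aux_source_eq_s {lam : FinPath G} {f : G.E} (h : lam.edges.getLast? = some f) :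
    lam.source = G.s f := by
  simp [FinPath.source, h]

/-- If `ρ` is a proper initial segment of `lam`, the next edge of `lam` after `ρ`
has range `ρ.source`. -/
theorem aux_range_head {lam ρ : FinPath G} (hv : lam.vtx = ρ.vtx)
    (hpre : ρ.edges <+: lam.edges) :
    ∀ e ∈ (lam.edges.drop ρ.edges.length).head?, G.r e = ρ.source := by
  intro e he
  have hgl : lam.edges[ρ.edges.length]? = some e := by
    rw [← List.head?_drop]; exact he
  have hlt : ρ.edges.length < lam.edges.length := by
    by_contra hh
    push_neg at hh
    rw [List.getElem?_eq_none hh] at hgl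
    exact absurd hgl (by simp)
  have hget : lam.edges[ρ.edges.length]'hlt = e := by
    rw [List.getElem?_eq_getElem hlt] at hgl
    exact Option.some.inj hgl
  rcases eq_or_ne ρ.edges [] with hnil | hnil
  · have h0 : (0:ℕ) < lam.edges.length := by
      rw [hnil] at hlt; simpa using hlt
    have h1 : G.r e = lam.vtx := by
      apply lam.hv
      rw [List.head?_eq_getElem?, List.getElem?_eq_getElem h0]
      have hz : ρ.edges.length = 0 := by rw [hnil]; rfl
      simp only [hz] at hget
      exact Option.mem_some_iff.mpr hget
    rw [h1, hv]
    simp [FinPath.source, hnil]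
  · have hρpos : 0 < ρ.edges.length := List.length_pos_iff.mpr hnil
    have hsrc : ρ.source = G.s (ρ.edges.getLast hnil) := by
      simp [FinPath.source, List.getLast?_eq_getLast hnil]
    have hpg : ρ.edges.getLast hnil
        = lam.edges[ρ.edges.length - 1]'(by omega) := by
      rw [List.getLast_eq_getElem]
      exact hpre.getElem (by omega)
    have hch := List.isChain_iff_getElem.mp lam.chain (ρ.edges.length - 1) (by omega)
    have hidx : ρ.edges.length - 1 + 1 = ρ.edges.length := by omega
    simp only [hidx] at hch
    rw [hsrc, hpg, ← hget]
    exact hch.symm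

/-- If the infinite path `y` extends `ρ`, the next edge of `y` after `ρ` has range
`ρ.source`. -/
theorem aux_range_edge {y : InfPath G} {ρ : FinPath G} (hy : y.Extends ρ) :
    G.r (y.edge ρ.edges.length) = ρ.source := by
  rcases eq_or_ne ρ.edges [] with hnil | hnil
  · have h1 := hy.1 hnil
    simp only [hnil, List.length_nil, FinPath.source, List.getLast?_nil]
    exact h1
  · have hρpos : 0 < ρ.edges.length := List.length_pos_iff.mpr hnil
    have hsrc : ρ.source = G.s (ρ.edges.getLast hnil) := by
      simp [FinPath.source, List.getLast?_eq_getLast hnil]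
    have hpg : ρ.edges.getLast hnil
        = ρ.edges.get ⟨ρ.edges.length - 1, by omega⟩ := by
      rw [List.getLast_eq_getElem]; rfl
    have hch := y.chain (ρ.edges.length - 1)
    have hidx : ρ.edges.length - 1 + 1 = ρ.edges.length := by omega
    rw [hidx] at hch
    rw [hsrc, hpg, ← hy.2 (ρ.edges.length - 1) (by omega)]
    exact hch.symm

end DirectedGraph

open DirectedGraph in
/-- with rho = x(0,n) a longest initial segment of the boundary path x
lying in F, and F_x the set of tails (after rho) of the proper extensions of rho lying
in F, there is a path nu with range s(rho) having no common extension with any path in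
F_x (provided s(rho) receives an edge). -/
theorem exists_path_no_common_extension (G : DirectedGraph)
    (x : PathSpace G) (hx : x ∈ BoundaryPaths G) (F : Finset (FinPath G))
    (rho : FinPath G) (hrhoF : rho ∈ F) (hrhox : x ∈ Cyl rho)
    (hmax : ∀ sig ∈ F, x ∈ Cyl sig → sig.length ≤ rho.length)
    (hne : ∃ e : G.E, G.r e = rho.source) :
    ∃ nu : FinPath G, nu.range = rho.source ∧
      ∀ sig ∈ F, sig ≠ rho → sig.Extends rho →
        ¬ (nu.Extends (sig.tailAfter rho.edges.length rho.source) ∨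
           (sig.tailAfter rho.edges.length rho.source).Extends nu) := by
  classical
  set n := rho.edges.length with hn
  -- proper extensions of rho in F are strictly longer
  have key : ∀ sig ∈ F, sig ≠ rho → sig.Extends rho → n < sig.edges.length := by
    intro sig hsF hsne hsext
    rcases lt_or_eq_of_le hsext.2.length_le with h | h
    · exact h
    · exact absurd (FinPath.ext' hsext.1 (hsext.2.eq_of_length h).symm) hsne
  cases x with
  | inr y =>
    have hy : y.Extends rho := hrhox
    set m : ℕ := F.sup (fun s => s.edges.length) with hm
    refine ⟨⟨rho.source, List.ofFn (fun i : Fin (m + 1) => y.edge (n + i)), ?_, ?_⟩,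
      rfl, ?_⟩
    · show List.IsChain _ _
      rw [List.isChain_iff_getElem]
      intro i hi
      simp only [List.length_ofFn] at hi
      simp only [List.get_eq_getElem, List.getElem_ofFn]
      exact y.chain (n + i)
    · intro e he
      rw [List.ofFn_succ] at he
      simp only [List.head?_cons, Option.mem_some_iff] at he
      subst he
      simpa using aux_range_edge hy
    · intro sig hsF hsne hsext
      have hk := key sig hsF hsne hsext
      rintro (⟨_, hp⟩ | ⟨_, hp⟩)
      · -- sig.edges.drop n is a prefix of nu.edges : contradicts maximality
        have hp' : sig.edges.drop n <+: List.ofFn (fun i : Fin (m + 1) => y.edge (n + i)) := hp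
        have hcyl : (Sum.inr y : PathSpace G) ∈ Cyl sig := by
          show y.Extends sig
          constructor
          · intro hnil
            exact absurd hnil (by intro hh; rw [hh] at hk; simp at hk)
          · intro i hi
            have hsig : rho.edges ++ sig.edges.drop n = sig.edges :=
              aux_prefix_append_drop hsext.2
            rcases lt_or_ge i n with hilt | hige
            · have := hy.2 i hilt
              simp only [List.get_eq_getElem] at this ⊢
              exact this.trans (hsext.2.getElem hilt)
            · simp only [List.get_eq_getElem]
              have hlen : i - n < (sig.edges.drop n).length := by
                simp only [List.length_drop]; omega
              have h1 : sig.edges[i] = (sig.edges.drop n)[i - n]'hlen := by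
                rw [List.getElem_drop]
                congr 1
                omega
              have h2 := hp'.getElem hlen
              rw [h1, h2, List.getElem_ofFn]
              show y.edge i = y.edge (n + (i - n))
              congr 1
              omega
        have h1 := hmax sig hsF hcyl
        simp only [FinPath.length] at h1
        omega
      · -- nu.edges is a prefix of sig.edges.drop n : too long
        have hp' : (List.ofFn (fun i : Fin (m + 1) => y.edge (n + i))) <+: sig.edges.drop n := hp
        have h1 := hp'.length_le
        simp only [List.length_ofFn, List.length_drop] at h1
        have h2 : sig.edges.length ≤ m := Finset.le_sup (f := fun s => s.edges.length) hsF
        omega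
  | inl mu =>
    have hmu : mu.Extends rho := hrhox
    obtain ⟨hvtx, hpre⟩ := hmu
    have hsing : Singular G mu.source := hx
    have hmuapp : rho.edges ++ mu.edges.drop n = mu.edges := aux_prefix_append_drop hpre
    -- shared contradiction: tail of sig prefix of tail of mu
    have habs : ∀ sig ∈ F, sig ≠ rho → sig.Extends rho →
        ¬ (sig.edges.drop n <+: mu.edges.drop n) := by
      intro sig hsF hsne hsext hp
      have hcyl : (Sum.inl mu : PathSpace G) ∈ Cyl sig := by
        show mu.Extends sig
        constructor
        · rw [hvtx]; exact hsext.1.symm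
        · obtain ⟨u, hu⟩ := hp
          refine ⟨u, ?_⟩
          rw [← aux_prefix_append_drop hsext.2, List.append_assoc, hu, hmuapp]
      have h1 := hmax sig hsF hcyl
      have hk := key sig hsF hsne hsext
      simp only [FinPath.length] at h1
      omega
    -- if the tail of mu is empty then mu.source = rho.source
    have hsrc_eq : mu.edges.length ≤ n → mu.source = rho.source := by
      intro hle
      have : mu.edges = rho.edges := (hpre.eq_of_length (le_antisymm hpre.length_le hle)).symm
      rw [FinPath.ext' hvtx this]
    rcases hsing with hempty | hinf
    · -- mu.source receives no edges
      have hnorecv : ∀ e : G.E, G.r e ≠ mu.source := by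
        intro e hre
        have : e ∈ G.r ⁻¹' {mu.source} := hre
        rw [hempty] at this
        exact this
      have hlen : n < mu.edges.length := by
        by_contra hh
        push_neg at hh
        obtain ⟨e, he⟩ := hne
        exact hnorecv e (by rw [he, ← hsrc_eq hh])
      refine ⟨⟨rho.source, mu.edges.drop n, mu.chain.suffix (List.drop_suffix n _),
        aux_range_head hvtx hpre⟩, rfl, ?_⟩
      intro sig hsF hsne hsext
      have hk := key sig hsF hsne hsext
      rintro (⟨_, hp⟩ | ⟨_, hp⟩)
      · -- sig.edges.drop n <+: mu.edges.drop n
        exact habs sig hsF hsne hsext hp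
      · -- mu.edges.drop n <+: sig.edges.drop n
        have hp' : mu.edges.drop n <+: sig.edges.drop n := hp
        set k := (mu.edges.drop n).length with hkdef
        have hk0 : 0 < k := by simp only [hkdef, List.length_drop]; omega
        rcases eq_or_lt_of_le hp'.length_le with heq | hlt
        · exact habs sig hsF hsne hsext (by rw [hp'.eq_of_length heq])
        · -- sig tail is strictly longer: next edge has range mu.source
          have hklt : k < (sig.edges.drop n).length := hlt
          have hchain : (sig.edges.drop n).Chain' (fun e f => G.s e = G.r f) :=
            sig.chain.suffix (List.drop_suffix n _)
          have hch := List.isChain_iff_getElem.mp hchain (k - 1) (by omega)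
          have hidx : k - 1 + 1 = k := by omega
          simp only [hidx] at hch
          have hlast : (sig.edges.drop n)[k - 1]'(by omega)
              = (mu.edges.drop n)[k - 1]'(by omega) :=
            (hp'.getElem (by omega)).symm
          have hkval : k = mu.edges.length - n := by rw [hkdef, List.length_drop]
          have hmusrc : G.s ((mu.edges.drop n)[k - 1]'(by omega)) = mu.source := by
            have hmne : mu.edges ≠ [] := by
              intro hh; rw [hh] at hlen; simp at hlen
            have h2 : n + (k - 1) = mu.edges.length - 1 := by omega
            have hb : n + (k - 1) < mu.edges.length := by omega
            have h1 : (mu.edges.drop n)[k - 1]'(by omega)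
                = mu.edges[n + (k - 1)]'hb :=
              List.getElem_drop
            have h4 : mu.edges[n + (k - 1)]'hb
                = mu.edges[mu.edges.length - 1]'(by omega) := by
              simp only [h2]
            have h3 : mu.source = G.s (mu.edges.getLast hmne) :=
              aux_source_eq_s (List.getLast?_eq_getLast hmne)
            rw [h3, List.getLast_eq_getElem, h1, h4]
          have : G.r ((sig.edges.drop n)[k]'hklt) = mu.source := by
            rw [← hch, hlast, hmusrc]
          exact hnorecv _ this
    · -- mu.source receives infinitely many edges
      set Fedges : Finset G.E := F.biUnion (fun s => s.edges.toFinset) with hFe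
      obtain ⟨e, he, hef⟩ := hinf.exists_notMem_finset Fedges
      have hre : G.r e = mu.source := he
      have henotin : ∀ sig ∈ F, e ∉ sig.edges := by
        intro sig hsF hmem
        exact hef (Finset.mem_biUnion.mpr ⟨sig, hsF, List.mem_toFinset.mpr hmem⟩)
      have hchain : (mu.edges.drop n ++ [e]).Chain' (fun a b => G.s a = G.r b) := by
        show List.IsChain _ _
        rw [List.isChain_append]
        refine ⟨mu.chain.suffix (List.drop_suffix n _), List.isChain_singleton e, ?_⟩
        intro f hf g hg
        simp only [List.head?_cons, Option.mem_some_iff] at hg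
        subst hg
        rw [hre]
        have hdne : mu.edges.drop n ≠ [] := by
          intro hh; rw [hh] at hf; exact absurd hf (by simp)
        have hfl : mu.edges.getLast? = some f := by
          rw [← hmuapp, List.getLast?_append]
          rw [List.getLast?_eq_getLast hdne] at hf ⊢
          simp only [Option.mem_some_iff] at hf
          rw [hf]
          rfl
        exact (aux_source_eq_s hfl).symm
      have hhv : ∀ f ∈ (mu.edges.drop n ++ [e]).head?, G.r f = rho.source := by
        intro f hf
        rcases eq_or_ne (mu.edges.drop n) [] with hdnil | hdnil
        · rw [hdnil] at hf
          simp only [List.nil_append, List.head?_cons, Option.mem_some_iff] at hf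
          subst hf
          rw [hre]
          apply hsrc_eq
          have := congrArg List.length hdnil
          simp only [List.length_drop, List.length_nil] at this
          omega
        · apply aux_range_head hvtx hpre
          rw [List.head?_append] at hf
          rw [List.head?_eq_head hdnil] at hf ⊢
          simpa using hf
      refine ⟨⟨rho.source, mu.edges.drop n ++ [e], hchain, hhv⟩, rfl, ?_⟩
      intro sig hsF hsne hsext
      have hk := key sig hsF hsne hsext
      rintro (⟨_, hp⟩ | ⟨_, hp⟩)
      · -- sig.edges.drop n <+: mu.edges.drop n ++ [e]
        have hp' : sig.edges.drop n <+: mu.edges.drop n ++ [e] := hp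
        rcases List.prefix_concat_iff.mp hp' with heq | hpp
        · -- e occurs in sig
          have : e ∈ sig.edges.drop n := by rw [heq]; simp
          exact henotin sig hsF (List.drop_subset n _ this)
        · exact habs sig hsF hsne hsext hpp
      · -- mu.edges.drop n ++ [e] <+: sig.edges.drop n
        have hp' : mu.edges.drop n ++ [e] <+: sig.edges.drop n := hp
        have : e ∈ sig.edges.drop n := hp'.subset (by simp)
        exact henotin sig hsF (List.drop_subset n _ this)
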